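/- A general ring I is strongly π-regular (every element strongly π-regular) if and only if I is quasipolar and QN(I) ⊆ Nil(I). -/

import Mathlib

variable {I : Type*} [NonUnitalRing I]

/-- quasiregular elements: p * q = 0 = q * p with p*q = p+q-pq -/
def inQ (a : I) : Prop := ∃ p : I, p + a - p * a = 0 ∧ a + p - a * p = 0

def inQN (a : I) : Prop := ∀ x : I, a * x = x * a → inQ (a * x)

def inComm2 (a x : I) : Prop := ∀ y : I, y * a = a * y → x * y = y * x

def IsQuasipolarElem (a : I) : Prop :=
  ∃ p : I, p * p = p ∧ inComm2 a p ∧ inQ (a + p) ∧ inQN (a - a * p)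

/-- pw a n = a^(n+1) -/
def pw (a : I) : ℕ → I
  | 0 => a
  | n + 1 => pw a n * a

def IsSPiReg (a : I) : Prop := ∃ n : ℕ, ∃ x : I, a * x = x * a ∧ pw a n = pw a (n + 1) * x

def IsNilp (a : I) : Prop := ∃ n : ℕ, pw a n = 0

def IsStrReg (a : I) : Prop := ∃ b : I, a * b = b * a ∧ a = a * b * a

/-! ### Auxiliary lemmas -/

private lemma osmos {R : Type*} [Ring R] (P A : R) :
    (1 - P) * (1 - A) = 1 - (P + A - P * A) := by noncomm_ring

private lemma idem_pow' {R : Type*} [Monoid R] {p : R} (h : p * p = p) (m : ℕ) :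
    p ^ (m + 1) = p := by
  induction m with
  | zero => rw [pow_one]
  | succ m ih => rw [pow_succ, ih, h]

private lemma inr_pw (a : I) (n : ℕ) :
    ((pw a n : I) : Unitization ℤ I) = (a : Unitization ℤ I) ^ (n + 1) := by
  induction n with
  | zero => simp [pw]
  | succ n ih => rw [pw, Unitization.inr_mul, ih, ← pow_succ]

private lemma inQ_iff (a : I) : inQ a ↔ IsUnit (1 - (a : Unitization ℤ I)) := by
  constructor
  · rintro ⟨p, h1, h2⟩
    rw [isUnit_iff_exists]
    refine ⟨1 - (p : Unitization ℤ I), ?_, ?_⟩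
    · rw [osmos (R := Unitization ℤ I)]
      have : ((a + p - a * p : I) : Unitization ℤ I) = 0 := by rw [h2]; simp
      simp only [Unitization.inr_sub, Unitization.inr_add, Unitization.inr_mul] at this
      rw [this, sub_zero]
    · rw [osmos (R := Unitization ℤ I)]
      have : ((p + a - p * a : I) : Unitization ℤ I) = 0 := by rw [h1]; simp
      simp only [Unitization.inr_sub, Unitization.inr_add, Unitization.inr_mul] at this
      rw [this, sub_zero]
  · intro h
    obtain ⟨v, hv1, hv2⟩ := isUnit_iff_exists.mp h
    have hfst : v.fst = 1 := by
      have h3 : (1 - (a : Unitization ℤ I)).fst * v.fst = 1 := by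
        rw [← Unitization.fst_mul, hv1]; rfl
      have h4 : (1 - (a : Unitization ℤ I)).fst = 1 := by
        have : (1 - (a : Unitization ℤ I)).fst = (Unitization.fstHom ℤ I) (1 - a) := rfl
        rfl
      rw [h4, one_mul] at h3
      exact h3
    have hv : v = 1 - ((-v.snd : I) : Unitization ℤ I) := by
      conv_lhs => rw [← Unitization.inl_fst_add_inr_snd_eq v]
      rw [hfst, Unitization.inr_neg, sub_neg_eq_add, Unitization.inl_one]
    rw [hv] at hv1 hv2
    rw [osmos (R := Unitization ℤ I)] at hv2
    rw [osmos ((a : Unitization ℤ I)) _] at hv1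
    refine ⟨-v.snd, ?_, ?_⟩
    · apply Unitization.inr_injective (R := ℤ)
      simp only [Unitization.inr_sub, Unitization.inr_add, Unitization.inr_mul,
        Unitization.inr_zero]
      exact sub_eq_self.mp hv2
    · apply Unitization.inr_injective (R := ℤ)
      simp only [Unitization.inr_sub, Unitization.inr_add, Unitization.inr_mul,
        Unitization.inr_zero]
      exact sub_eq_self.mp hv1

private lemma isNilp_iff (a : I) : IsNilp a ↔ IsNilpotent (a : Unitization ℤ I) := by
  constructor
  · rintro ⟨n, hn⟩
    exact ⟨n + 1, by rw [← inr_pw, hn, Unitization.inr_zero]⟩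
  · rintro ⟨n, hn⟩
    cases n with
    | zero =>
      exfalso
      rw [pow_zero] at hn
      simpa using congrArg (fun z : Unitization ℤ I => z.fst) hn
    | succ m =>
      refine ⟨m, ?_⟩
      apply Unitization.inr_injective (R := ℤ)
      rw [inr_pw, Unitization.inr_zero]; exact hn

private lemma inr_comm {a b : I} (h : a * b = b * a) :
    Commute (a : Unitization ℤ I) (b : Unitization ℤ I) := by
  have := congrArg (fun z : I => (z : Unitization ℤ I)) h
  simpa [Unitization.inr_mul, Commute, SemiconjBy] using this

private lemma nilp_inQ {s : I} (h : IsNilp s) : inQ s :=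
  (inQ_iff s).mpr (IsNilpotent.isUnit_one_sub (R := Unitization ℤ I) ((isNilp_iff s).mp h))

private lemma nilp_inQN {s : I} (h : IsNilp s) : inQN s := by
  intro y hy
  apply nilp_inQ
  rw [isNilp_iff] at h ⊢
  rw [Unitization.inr_mul]
  exact Commute.isNilpotent_mul_right (R := Unitization ℤ I) (inr_comm hy) h

private lemma key_ring {R : Type*} [Ring R] (A X : R) (n : ℕ) (hAX : A * X = X * A)
    (hK : A ^ (n + 2) * X = A ^ (n + 1)) :
    (A ^ (n+1) * X ^ (n+1)) * (A ^ (n+1) * X ^ (n+1)) = A ^ (n+1) * X ^ (n+1) ∧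
    A ^ (n+1) * (A ^ (n+1) * X ^ (n+1)) = A ^ (n+1) ∧
    (A ^ (n+1) * X ^ (n+1)) * A ^ (n+1) = A ^ (n+1) ∧
    A * (A ^ (n+1) * (X ^ (n+1) * X)) = A ^ (n+1) * X ^ (n+1) ∧
    (A ^ (n+1) * (X ^ (n+1) * X)) * A = A ^ (n+1) * X ^ (n+1) ∧
    (A - A * (A ^ (n+1) * X ^ (n+1))) ^ (n+1) = 0 ∧
    IsUnit (1 - A - A ^ (n+1) * X ^ (n+1)) := by
  set K := n + 1 with hKdef
  have hcs : ∀ p ∈ ({A, X} : Set R), ∀ q ∈ ({A, X} : Set R), p * q = q * p := by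
    rintro p hp' q hq'
    simp only [Set.mem_insert_iff, Set.mem_singleton_iff] at hp' hq'
    rcases hp' with rfl | rfl <;> rcases hq' with rfl | rfl
    · rfl
    · exact hAX
    · exact hAX.symm
    · rfl
  letI : CommRing (Subring.closure ({A, X} : Set R)) := Subring.closureCommRingOfComm hcs
  set A' : Subring.closure ({A, X} : Set R) := ⟨A, Subring.subset_closure (by simp)⟩ with hA'
  set X' : Subring.closure ({A, X} : Set R) := ⟨X, Subring.subset_closure (by simp)⟩ with hX'
  have hK' : A' ^ (K + 1) * X' = A' ^ K := by
    apply Subtype.ext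
    push_cast
    exact hK
  have hred : ∀ m : ℕ, A' ^ (K + m) * X' ^ m = A' ^ K := by
    intro m
    induction m with
    | zero => simp
    | succ m ih =>
      calc A' ^ (K + (m+1)) * X' ^ (m+1) = (A' ^ (K+m) * X' ^ m) * (A' * X') := by ring
        _ = A' ^ K * (A' * X') := by rw [ih]
        _ = A' ^ (K+1) * X' := by ring
        _ = A' ^ K := hK'
  set E' : Subring.closure ({A, X} : Set R) := A' ^ K * X' ^ K with hE'
  set D' : Subring.closure ({A, X} : Set R) := A' ^ K * X' ^ (K + 1) with hD'
  set T' : Subring.closure ({A, X} : Set R) := A' - A' * E' with hT'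
  have f1 : A' ^ K * E' = A' ^ K := by
    calc A' ^ K * E' = A' ^ (K + K) * X' ^ K := by rw [hE']; ring
      _ = A' ^ K := hred K
  have f2 : E' * E' = E' := by
    calc E' * E' = (A' ^ (K + K) * X' ^ K) * X' ^ K := by rw [hE']; ring
      _ = A' ^ K * X' ^ K := by rw [hred K]
      _ = E' := hE'.symm
  have f3 : A' * D' = E' := by
    calc A' * D' = (A' ^ (K+1) * X') * X' ^ K := by rw [hD']; ring
      _ = A' ^ K * X' ^ K := by rw [hK']
      _ = E' := hE'.symm
  have f4 : E' * D' = D' := by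
    calc E' * D' = (A' ^ (K + K) * X' ^ K) * X' ^ (K+1) := by rw [hE', hD']; ring
      _ = A' ^ K * X' ^ (K+1) := by rw [hred K]
      _ = D' := hD'.symm
  have f5 : T' ^ K = 0 := by
    have hI : (1 - E') * (1 - E') = 1 - E' := by linear_combination f2
    have h1 : T' = A' * (1 - E') := by rw [hT']; ring
    rw [h1, mul_pow, hKdef, idem_pow' hI n]
    linear_combination -f1
  have f7 : E' * T' = 0 := by
    rw [hT']
    linear_combination (-A') * f2
  obtain ⟨U, hU⟩ := (IsNilpotent.isUnit_one_sub ⟨K, f5⟩).exists_right_inv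
  have h9 : E' * (1 - T') = E' := by linear_combination -f7
  have f8 : E' * U = E' := by
    calc E' * U = (E' * (1 - T')) * U := by rw [h9]
      _ = E' * ((1 - T') * U) := by ring
      _ = E' := by rw [hU, mul_one]
  have f9 : (1 - A' - E') * ((1 - E') * U - D') = 1 := by
    have hU' : (1 - (A' - A' * E')) * U = 1 := by rw [← hT']; exact hU
    linear_combination U * f2 + f4 + f3 - f8 + hU'
  have f6 : IsUnit (1 - A' - E') := IsUnit.of_mul_eq_one _ f9
  refine ⟨?_, ?_, ?_, ?_, ?_, ?_, ?_⟩
  · have := congrArg Subtype.val f2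
    push_cast at this
    exact this
  · have := congrArg Subtype.val f1
    push_cast at this
    exact this
  · have f1b : E' * A' ^ K = A' ^ K := by rw [mul_comm]; exact f1
    have := congrArg Subtype.val f1b
    push_cast at this
    exact this
  · have f3b : A' * (A' ^ K * (X' ^ K * X')) = A' ^ K * X' ^ K := by
      calc A' * (A' ^ K * (X' ^ K * X')) = A' * D' := by rw [hD']; ring
        _ = E' := f3
        _ = A' ^ K * X' ^ K := hE'
    have := congrArg Subtype.val f3b
    push_cast at this
    exact this
  · have f3c : (A' ^ K * (X' ^ K * X')) * A' = A' ^ K * X' ^ K := by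
      calc (A' ^ K * (X' ^ K * X')) * A' = A' * D' := by rw [hD']; ring
        _ = E' := f3
        _ = A' ^ K * X' ^ K := hE'
    have := congrArg Subtype.val f3c
    push_cast at this
    exact this
  · have f5b : (A' - A' * (A' ^ K * X' ^ K)) ^ K = 0 := by rw [← hE', ← hT']; exact f5
    have := congrArg Subtype.val f5b
    push_cast at this
    exact this
  · have f6b : IsUnit ((1 - A' - E' : Subring.closure ({A, X} : Set R)) : R) :=
      f6.map (Subring.closure ({A, X} : Set R)).subtype
    have hval : ((1 - A' - E' : Subring.closure ({A, X} : Set R)) : R)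
        = 1 - A - A ^ K * X ^ K := by
      push_cast
      rfl
    rwa [hval] at f6b

private lemma comm2_ring {R : Type*} [Ring R] (A X Y : R) (K : ℕ)
    (hYA : Y * A = A * Y) (hAX : A * X = X * A)
    (f1 : A ^ K * (A ^ K * X ^ K) = A ^ K) (f1b : (A ^ K * X ^ K) * A ^ K = A ^ K) :
    (A ^ K * X ^ K) * Y = Y * (A ^ K * X ^ K) := by
  have cAX : Commute A X := hAX
  have cYA : Commute Y A := hYA
  have hYAK : Y * A ^ K = A ^ K * Y := (cYA.pow_right K)
  have hswap : A ^ K * X ^ K = X ^ K * A ^ K := (cAX.pow_pow K K).eq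
  have c1 : (A ^ K * X ^ K) * Y * (A ^ K * X ^ K) = (A ^ K * X ^ K) * Y := by
    calc (A ^ K * X ^ K) * Y * (A ^ K * X ^ K)
        = X ^ K * (A ^ K * Y) * (A ^ K * X ^ K) := by rw [hswap]; noncomm_ring
      _ = X ^ K * (Y * A ^ K) * (A ^ K * X ^ K) := by rw [← hYAK]
      _ = X ^ K * Y * (A ^ K * (A ^ K * X ^ K)) := by noncomm_ring
      _ = X ^ K * Y * A ^ K := by rw [f1]
      _ = X ^ K * (Y * A ^ K) := by noncomm_ring
      _ = X ^ K * (A ^ K * Y) := by rw [hYAK]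
      _ = (A ^ K * X ^ K) * Y := by rw [hswap]; noncomm_ring
  have c2 : (A ^ K * X ^ K) * (Y * (A ^ K * X ^ K)) = Y * (A ^ K * X ^ K) := by
    calc (A ^ K * X ^ K) * (Y * (A ^ K * X ^ K))
        = (A ^ K * X ^ K) * ((Y * A ^ K) * X ^ K) := by noncomm_ring
      _ = (A ^ K * X ^ K) * ((A ^ K * Y) * X ^ K) := by rw [hYAK]
      _ = ((A ^ K * X ^ K) * A ^ K) * (Y * X ^ K) := by noncomm_ring
      _ = A ^ K * (Y * X ^ K) := by rw [f1b]
      _ = (A ^ K * Y) * X ^ K := by noncomm_ring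
      _ = (Y * A ^ K) * X ^ K := by rw [hYAK]
      _ = Y * (A ^ K * X ^ K) := by noncomm_ring
  calc (A ^ K * X ^ K) * Y = (A ^ K * X ^ K) * Y * (A ^ K * X ^ K) := c1.symm
    _ = (A ^ K * X ^ K) * (Y * (A ^ K * X ^ K)) := by noncomm_ring
    _ = Y * (A ^ K * X ^ K) := c2

private lemma back_ring {R : Type*} [Ring R] (A P V : R) (m : ℕ) (hPP : P * P = P)
    (hPA : P * A = A * P)
    (hV1 : (1 - A - P) * V = 1) (hV2 : V * (1 - A - P) = 1)
    (hnil : (A - A * P) ^ (m + 1) = 0) :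
    A ^ (m + 1) = A ^ (m + 2) * (-(V * P)) ∧ A * (-(V * P)) = (-(V * P)) * A := by
  have hW : ∀ r : R, (1 - A - P) * r = r * (1 - A - P) → V * r = r * V := by
    intro r hr
    calc V * r = V * r * ((1 - A - P) * V) := by rw [hV1, mul_one]
      _ = V * (r * (1 - A - P)) * V := by noncomm_ring
      _ = V * ((1 - A - P) * r) * V := by rw [hr]
      _ = (V * (1 - A - P)) * (r * V) := by noncomm_ring
      _ = r * V := by rw [hV2, one_mul]
  have hVA : V * A = A * V := hW A (by
    rw [sub_mul, sub_mul, one_mul, mul_sub, mul_sub, mul_one, hPA])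
  have hVP : V * P = P * V := hW P (by
    rw [sub_mul, sub_mul, one_mul, mul_sub, mul_sub, mul_one, hPA])
  have hstep : (1 - A - P) * P = -(A * P) := by
    rw [sub_mul, sub_mul, one_mul, hPP]
    abel
  have hPeq : P = -(V * (A * P)) := by
    calc P = (V * (1 - A - P)) * P := by rw [hV2, one_mul]
      _ = V * ((1 - A - P) * P) := by noncomm_ring
      _ = V * (-(A * P)) := by rw [hstep]
      _ = -(V * (A * P)) := by noncomm_ring
  have hcomm1P : Commute A (1 - P) := by
    show A * (1 - P) = (1 - P) * A
    rw [mul_sub, sub_mul, mul_one, one_mul, hPA]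
  have hIdem : (1 - P) * (1 - P) = 1 - P := by
    have h2 : (1 - P) * (1 - P) = 1 - P - P + P * P := by noncomm_ring
    rw [h2, hPP]
    abel
  have hAmP : A ^ (m+1) * P = A ^ (m+1) := by
    have h1 : A - A * P = A * (1 - P) := by noncomm_ring
    rw [h1, Commute.mul_pow hcomm1P, idem_pow' hIdem m, mul_sub, mul_one] at hnil
    exact (sub_eq_zero.mp hnil).symm
  constructor
  · calc A ^ (m+1) = A ^ (m+1) * P := hAmP.symm
      _ = A ^ (m+1) * (-(V * (A * P))) := by rw [← hPeq]
      _ = -(A ^ (m+1) * (V * A) * P) := by noncomm_ring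
      _ = -(A ^ (m+1) * (A * V) * P) := by rw [hVA]
      _ = A ^ (m + 2) * (-(V * P)) := by
          rw [show (m + 2) = (m + 1) + 1 from rfl, pow_succ]
          noncomm_ring
  · calc A * (-(V * P)) = -((A * V) * P) := by noncomm_ring
      _ = -((V * A) * P) := by rw [hVA]
      _ = -(V * (A * P)) := by noncomm_ring
      _ = -(V * (P * A)) := by rw [hPA]
      _ = -((V * P) * A) := by noncomm_ring
      _ = (-(V * P)) * A := by noncomm_ring

private lemma main_fwd {a x : I} {n : ℕ} (hc : a * x = x * a) (hp : pw a n = pw a (n + 1) * x) :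
    ∃ e : I, e * e = e ∧ inComm2 a e ∧ pw a n * e = pw a n ∧
      (∃ c : I, a * c = c * a ∧ a * c = e) ∧ IsNilp (a - a * e) ∧ inQ (a + e) := by
  have hAX : (a : Unitization ℤ I) * (x : Unitization ℤ I)
      = (x : Unitization ℤ I) * (a : Unitization ℤ I) := inr_comm hc
  have hK : (a : Unitization ℤ I) ^ (n + 2) * (x : Unitization ℤ I)
      = (a : Unitization ℤ I) ^ (n + 1) := by
    have h0 := congrArg (fun z : I => (z : Unitization ℤ I)) hp
    simp only [inr_pw, Unitization.inr_mul] at h0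
    exact h0.symm
  obtain ⟨g1, g2, g3, g4, g4b, g5, g6⟩ :=
    key_ring (a : Unitization ℤ I) (x : Unitization ℤ I) n hAX hK
  have he : ((pw a n * pw x n : I) : Unitization ℤ I)
      = (a : Unitization ℤ I) ^ (n+1) * (x : Unitization ℤ I) ^ (n+1) := by
    rw [Unitization.inr_mul, inr_pw, inr_pw]
  have hcval : ((pw a n * (pw x n * x) : I) : Unitization ℤ I)
      = (a : Unitization ℤ I) ^ (n+1) * ((x : Unitization ℤ I) ^ (n+1) * x) := by
    rw [Unitization.inr_mul, Unitization.inr_mul, inr_pw, inr_pw]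
  refine ⟨pw a n * pw x n, ?_, ?_, ?_, ⟨pw a n * (pw x n * x), ?_, ?_⟩, ?_, ?_⟩
  · apply Unitization.inr_injective (R := ℤ)
    simp only [Unitization.inr_mul, inr_pw]
    exact g1
  · intro y hy
    apply Unitization.inr_injective (R := ℤ)
    simp only [Unitization.inr_mul, inr_pw]
    exact comm2_ring _ _ _ (n+1) (inr_comm hy).eq hAX g2 g3
  · apply Unitization.inr_injective (R := ℤ)
    simp only [Unitization.inr_mul, inr_pw]
    exact g2
  · apply Unitization.inr_injective (R := ℤ)
    simp only [Unitization.inr_mul, inr_pw]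
    exact g4.trans g4b.symm
  · apply Unitization.inr_injective (R := ℤ)
    simp only [Unitization.inr_mul, inr_pw]
    exact g4
  · rw [isNilp_iff]
    refine ⟨n + 1, ?_⟩
    simp only [Unitization.inr_sub, Unitization.inr_mul, inr_pw]
    exact g5
  · rw [inQ_iff]
    have hs : (1 : Unitization ℤ I) - ((a + (pw a n * pw x n) : I) : Unitization ℤ I)
        = 1 - (a : Unitization ℤ I)
          - (a : Unitization ℤ I) ^ (n+1) * (x : Unitization ℤ I) ^ (n+1) := by
      simp only [Unitization.inr_add, Unitization.inr_mul, inr_pw, sub_add_eq_sub_sub]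
    rw [hs]
    exact g6

theorem stmt15 :
    (∀ a : I, IsSPiReg a) ↔
      (∀ a : I, IsQuasipolarElem a) ∧ (∀ q : I, inQN q → IsNilp q) := by
  constructor
  · intro H
    constructor
    · intro a
      obtain ⟨n, x, hc, hp⟩ := H a
      obtain ⟨e, hee, hcomm2, hpe, _, hnil, hQ⟩ := main_fwd hc hp
      exact ⟨e, hee, hcomm2, hQ, nilp_inQN hnil⟩
    · intro q hq
      obtain ⟨n, x, hc, hp⟩ := H q
      obtain ⟨e, hee, _, hpe, ⟨c, hcc, hce⟩, _, _⟩ := main_fwd hc hp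
      have hQe : inQ e := hce ▸ hq c hcc
      obtain ⟨p, h1, _⟩ := hQe
      have h3 : (p + e - p * e) * e = e := by
        rw [sub_mul, add_mul, mul_assoc, hee, add_sub_cancel_left]
      rw [h1, zero_mul] at h3
      exact ⟨n, by rw [← hpe, ← h3, mul_zero]⟩
  · rintro ⟨H1, H2⟩ a
    obtain ⟨p, hpp, hcomm2, hQ, hQN⟩ := H1 a
    have hPA : p * a = a * p := hcomm2 a rfl
    obtain ⟨m, hm⟩ := H2 _ hQN
    obtain ⟨w, hw1, hw2⟩ := hQ
    have hw1' : ((w + (a + p) - w * (a + p) : I) : Unitization ℤ I) = 0 := by rw [hw1]; simp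
    have hw2' : (((a + p) + w - (a + p) * w : I) : Unitization ℤ I) = 0 := by rw [hw2]; simp
    simp only [Unitization.inr_sub, Unitization.inr_add, Unitization.inr_mul] at hw1' hw2'
    have hv1 : (1 - (a : Unitization ℤ I) - (p : Unitization ℤ I))
        * (1 - (w : Unitization ℤ I)) = 1 := by
      rw [sub_sub, osmos (R := Unitization ℤ I), hw2', sub_zero]
    have hv2 : (1 - (w : Unitization ℤ I))
        * (1 - (a : Unitization ℤ I) - (p : Unitization ℤ I)) = 1 := by
      rw [sub_sub, osmos (R := Unitization ℤ I), hw1', sub_zero]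
    have hPPc : (p : Unitization ℤ I) * (p : Unitization ℤ I) = (p : Unitization ℤ I) := by
      have := congrArg (fun z : I => (z : Unitization ℤ I)) hpp
      simpa [Unitization.inr_mul] using this
    have hPAc : (p : Unitization ℤ I) * (a : Unitization ℤ I)
        = (a : Unitization ℤ I) * (p : Unitization ℤ I) := inr_comm hPA
    have hnilc : ((a : Unitization ℤ I) - (a : Unitization ℤ I) * (p : Unitization ℤ I))
        ^ (m + 1) = 0 := by
      have := congrArg (fun z : I => (z : Unitization ℤ I)) hm
      simpa only [inr_pw, Unitization.inr_zero, Unitization.inr_sub,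
        Unitization.inr_mul] using this
    obtain ⟨heq, hcm⟩ := back_ring (a : Unitization ℤ I) (p : Unitization ℤ I)
      (1 - (w : Unitization ℤ I)) m hPPc hPAc hv1 hv2 hnilc
    have hx0 : ((w * p - p : I) : Unitization ℤ I)
        = -((1 - (w : Unitization ℤ I)) * (p : Unitization ℤ I)) := by
      rw [Unitization.inr_sub, Unitization.inr_mul]
      noncomm_ring
    refine ⟨m, w * p - p, ?_, ?_⟩
    · apply Unitization.inr_injective (R := ℤ)
      rw [Unitization.inr_mul, Unitization.inr_mul, hx0]
      exact hcm
    · apply Unitization.inr_injective (R := ℤ)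
      rw [Unitization.inr_mul, hx0, inr_pw, inr_pw]
      exact heq
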